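/- Let θ : ℤ × ℤ → ℝ be the flow defined below. Then for every integer w ≥ 4, ∑_{u ≥ ⌈w/3⌉, u ≠ 1} θ(u, u+w)² ≤ 144/(w − 3)³, and for w ∈ {2, 3}, ∑_{u ≥ 1, u ≠ 1} θ(u, u+w)² ≤ 16/3. -/

import Mathlib

/-- The index of the block of `ℤ` containing `u`, where `B_0 = {0}`,
`B_i = {2^(i-1), …, 2^i - 1}` and `B_{-i} = -B_i` for `i ≥ 1`. -/
def blockIdx (u : ℤ) : ℤ :=
  if u = 0 then 0
  else if 0 < u then (Nat.log 2 u.toNat : ℤ) + 1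
  else -((Nat.log 2 (-u).toNat : ℤ) + 1)

/-- The flow `θ` on `ℤ` from `0` to infinity: for `u ∈ B_i`, `v ∈ B_j`,
`θ(u,v) = 1/2` if `i = 0` and `j = ±1`; `θ(u,v) = 2^(-2|i|)` if `0 < i`, `j = i+1`
or `i < 0`, `j = i-1`; `θ(u,v) = 0` if `i = j` or `|i-j| ≥ 2`; and antisymmetry
`θ(u,v) = -θ(v,u)` in the remaining cases. -/
noncomputable def theta (u v : ℤ) : ℝ :=
  let i := blockIdx u
  let j := blockIdx v
  if i = 0 ∧ (j = 1 ∨ j = -1) then 1 / 2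
  else if j = 0 ∧ (i = 1 ∨ i = -1) then -(1 / 2)
  else if 0 < i ∧ j = i + 1 then (2 : ℝ) ^ (-(2 * i))
  else if i < 0 ∧ j = i - 1 then (2 : ℝ) ^ (2 * i)
  else if 0 < j ∧ i = j + 1 then -((2 : ℝ) ^ (-(2 * j)))
  else if j < 0 ∧ i = j - 1 then -((2 : ℝ) ^ (2 * j))
  else 0

/-- for every `w ≥ 4`,
`∑_{u ≥ ⌈w/3⌉, u ≠ 1} θ(u, u+w)² ≤ 144/(w-3)³`, and for `w ∈ {2,3}`,
`∑_{u ≥ 1, u ≠ 1} θ(u, u+w)² ≤ 16/3`. -/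
lemma theta_eq (u v : ℤ) : theta u v =
  (if blockIdx u = 0 ∧ (blockIdx v = 1 ∨ blockIdx v = -1) then 1 / 2
  else if blockIdx v = 0 ∧ (blockIdx u = 1 ∨ blockIdx u = -1) then -(1 / 2)
  else if 0 < blockIdx u ∧ blockIdx v = blockIdx u + 1 then (2 : ℝ) ^ (-(2 * blockIdx u))
  else if blockIdx u < 0 ∧ blockIdx v = blockIdx u - 1 then (2 : ℝ) ^ (2 * blockIdx u)
  else if 0 < blockIdx v ∧ blockIdx u = blockIdx v + 1 then -((2 : ℝ) ^ (-(2 * blockIdx v)))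
  else if blockIdx v < 0 ∧ blockIdx u = blockIdx v - 1 then -((2 : ℝ) ^ (2 * blockIdx v))
  else 0) := rfl

lemma step_ineq (x : ℝ) (hx : 2 ≤ x) :
    16 / x ^ 4 + 16 / (3 * x ^ 3) ≤ 16 / (3 * (x - 1) ^ 3) := by
  have h1 : (0:ℝ) < x - 1 := by linarith
  have h2 : (0:ℝ) < x := by linarith
  rw [div_add_div _ _ (by positivity) (by positivity),
    div_le_div_iff₀ (by positivity) (by positivity)]
  nlinarith [pow_pos h2 3, pow_pos h1 3, sq_nonneg x, sq_nonneg (x-1), pow_pos h2 4]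

lemma sum_Icc_aux (m : ℤ) (hm : 2 ≤ m) :
    ∀ N : ℤ, m - 1 ≤ N →
      ∑ u ∈ Finset.Icc m N, 16 / (u : ℝ) ^ 4
        ≤ 16 / (3 * ((m : ℝ) - 1) ^ 3) - 16 / (3 * (N : ℝ) ^ 3) := by
  refine Int.le_induction ?_ ?_
  · rw [Finset.Icc_eq_empty (by omega)]
    push_cast
    simp
  · intro N hN ih
    have hins : Finset.Icc m (N + 1) = insert (N + 1) (Finset.Icc m N) := by
      ext x; simp only [Finset.mem_Icc, Finset.mem_insert]; omega
    rw [hins, Finset.sum_insert (by simp [Finset.mem_Icc])]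
    have hstep := step_ineq ((N : ℝ) + 1) (by
      have : (1:ℤ) ≤ N := by omega
      have : (1:ℝ) ≤ (N:ℝ) := by exact_mod_cast this
      linarith)
    have he : ((N:ℝ) + 1) - 1 = (N:ℝ) := by ring
    rw [he] at hstep
    push_cast
    linarith

lemma sum_Icc_bound (m N : ℤ) (hm : 2 ≤ m) :
    ∑ u ∈ Finset.Icc m N, 16 / (u : ℝ) ^ 4 ≤ 16 / (3 * ((m : ℝ) - 1) ^ 3) := by
  have hm1 : (1:ℝ) ≤ (m:ℝ) - 1 := by
    have : (2:ℝ) ≤ (m:ℝ) := by exact_mod_cast hm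
    linarith
  rcases le_or_gt (m - 1) N with h | h
  · have hN : (1:ℝ) ≤ (N:ℝ) := by
      have : (1:ℤ) ≤ N := by omega
      exact_mod_cast this
    have := sum_Icc_aux m hm N h
    have hpos : 0 ≤ 16 / (3 * (N : ℝ) ^ 3) := by positivity
    linarith
  · rw [Finset.Icc_eq_empty (by omega), Finset.sum_empty]
    positivity

lemma theta_sq_le (u v : ℤ) (hu : 2 ≤ u) : theta u v ^ 2 ≤ 16 / (u : ℝ) ^ 4 := by
  have hu0 : (0:ℝ) < (u:ℝ) := by exact_mod_cast (by omega : (0:ℤ) < u)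
  have hupos : (0:ℤ) < u := by omega
  have hieq : blockIdx u = (Nat.log 2 u.toNat : ℤ) + 1 := by
    rw [blockIdx, if_neg (by omega), if_pos hupos]
  have hlog1 : 1 ≤ Nat.log 2 u.toNat := Nat.le_log_of_pow_le (by norm_num) (by omega)
  have hi2 : 2 ≤ blockIdx u := by omega
  have hult : (u : ℝ) < (2:ℝ) ^ (blockIdx u) := by
    have h1 : u.toNat < 2 ^ (Nat.log 2 u.toNat + 1) := Nat.lt_pow_succ_log_self (by norm_num) _
    have h2 : ((u.toNat : ℤ) : ℝ) < ((2 ^ (Nat.log 2 u.toNat + 1) : ℕ) : ℝ) := by exact_mod_cast h1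
    rw [Int.toNat_of_nonneg (by omega)] at h2
    rw [hieq]
    rw [show ((Nat.log 2 u.toNat : ℤ) + 1) = ((Nat.log 2 u.toNat + 1 : ℕ) : ℤ) by push_cast; ring,
      zpow_natCast]
    push_cast at h2 ⊢
    exact h2
  have key : ∀ k : ℤ, blockIdx u - 1 ≤ k → ((2:ℝ) ^ (-(2 * k))) ^ 2 ≤ 16 / (u:ℝ) ^ 4 := by
    intro k hk
    set A : ℝ := (2:ℝ) ^ k with hA
    have hApos : (0:ℝ) < A := zpow_pos (by norm_num) k
    have hle : (2:ℝ) ^ (blockIdx u - 1) ≤ A := zpow_le_zpow_right₀ (by norm_num) hk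
    have h2i : (2:ℝ) ^ (blockIdx u - 1) = (2:ℝ) ^ (blockIdx u) / 2 := by
      rw [zpow_sub₀ (by norm_num : (2:ℝ) ≠ 0), zpow_one]
    have hu2A : (u:ℝ) ≤ 2 * A := by
      rw [h2i] at hle; linarith
    have heq : (2:ℝ) ^ (-(2 * k)) = (A ^ 2)⁻¹ := by
      rw [zpow_neg, mul_comm, zpow_mul]
      norm_num
      rfl
    rw [heq, inv_pow, ← pow_mul]
    rw [inv_eq_one_div, div_le_div_iff₀ (by positivity) (by positivity)]
    have h4 : (u:ℝ) ^ 4 ≤ (2 * A) ^ 4 := pow_le_pow_left₀ hu0.le hu2A 4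
    have h16 : (2 * A) ^ 4 = 16 * A ^ 4 := by ring
    have hAA : A ^ (2 * 2) = A ^ 4 := by ring
    rw [hAA]
    linarith
  rw [theta_eq]
  split_ifs with h1 h2 h3 h4 h5 h6
  · exact absurd h1.1 (by omega)
  · rcases h2.2 with h | h <;> omega
  · exact key _ (by omega)
  · exact absurd h4.1 (by omega)
  · have he : (-((2:ℝ) ^ (-(2 * blockIdx v)))) ^ 2 = ((2:ℝ) ^ (-(2 * blockIdx v))) ^ 2 := by ring
    rw [he]
    exact key _ (by omega)
  · exact absurd (by omega : ¬ blockIdx u < 0) (not_not_intro (by omega : blockIdx u < 0))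
  · simp only [ne_eq, OfNat.ofNat_ne_zero, not_false_eq_true, zero_pow]
    positivity

lemma tsum_bound (m w : ℤ) (hm : 2 ≤ m) :
    (∑' u : ℤ, if m ≤ u ∧ u ≠ 1 then ENNReal.ofReal (theta u (u + w) ^ 2) else 0)
      ≤ ENNReal.ofReal (16 / (3 * ((m : ℝ) - 1) ^ 3)) := by
  classical
  rw [ENNReal.tsum_eq_iSup_sum]
  refine iSup_le fun s => ?_
  set N : ℤ := ((s.sup Int.toNat : ℕ) : ℤ) with hN
  calc ∑ u ∈ s, (if m ≤ u ∧ u ≠ 1 then ENNReal.ofReal (theta u (u+w)^2) else 0)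
      ≤ ∑ u ∈ s, (if m ≤ u then ENNReal.ofReal (16 / (u:ℝ)^4) else 0) := by
        refine Finset.sum_le_sum fun u _ => ?_
        split_ifs with h1 h2
        · exact ENNReal.ofReal_le_ofReal (theta_sq_le u (u+w) (by omega))
        · exact absurd h1.1 h2
        · exact zero_le
        · exact le_rfl
    _ = ∑ u ∈ s.filter (fun u => m ≤ u), ENNReal.ofReal (16 / (u:ℝ)^4) := by
        rw [Finset.sum_filter]
    _ ≤ ∑ u ∈ Finset.Icc m N, ENNReal.ofReal (16 / (u:ℝ)^4) := by
        refine Finset.sum_le_sum_of_subset fun u hu => ?_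
        simp only [Finset.mem_filter] at hu
        have hsup : u.toNat ≤ s.sup Int.toNat := Finset.le_sup hu.1
        simp only [Finset.mem_Icc]
        omega
    _ = ENNReal.ofReal (∑ u ∈ Finset.Icc m N, 16 / (u:ℝ)^4) := by
        rw [ENNReal.ofReal_sum_of_nonneg]
        intro u _
        positivity
    _ ≤ ENNReal.ofReal (16 / (3 * ((m : ℝ) - 1) ^ 3)) :=
        ENNReal.ofReal_le_ofReal (sum_Icc_bound m N hm)

theorem theta_tail_square_sum_bound :
    (∀ w : ℤ, 4 ≤ w →
      ∑' u : ℤ,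
          (if ⌈(w : ℚ) / 3⌉ ≤ u ∧ u ≠ 1 then
            ENNReal.ofReal (theta u (u + w) ^ 2) else 0)
        ≤ ENNReal.ofReal (144 / ((w : ℝ) - 3) ^ 3)) ∧
    (∀ w : ℤ, w = 2 ∨ w = 3 →
      ∑' u : ℤ,
          (if 1 ≤ u ∧ u ≠ 1 then ENNReal.ofReal (theta u (u + w) ^ 2) else 0)
        ≤ ENNReal.ofReal (16 / 3)) := by

  constructor
  · intro w hw
    set m : ℤ := ⌈(w : ℚ) / 3⌉ with hmdef
    have hceil : (w : ℚ) / 3 ≤ (m : ℚ) := Int.le_ceil _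
    have h3m : w ≤ 3 * m := by
      have : (w : ℚ) ≤ 3 * (m : ℚ) := by linarith
      exact_mod_cast this
    have hm2 : 2 ≤ m := by omega
    calc (∑' u : ℤ, if m ≤ u ∧ u ≠ 1 then ENNReal.ofReal (theta u (u + w) ^ 2) else 0)
        ≤ ENNReal.ofReal (16 / (3 * ((m : ℝ) - 1) ^ 3)) := tsum_bound m w hm2
      _ ≤ ENNReal.ofReal (144 / ((w : ℝ) - 3) ^ 3) := by
          refine ENNReal.ofReal_le_ofReal ?_
          have hmr : (2:ℝ) ≤ (m:ℝ) := by exact_mod_cast hm2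
          have hwr : (4:ℝ) ≤ (w:ℝ) := by exact_mod_cast hw
          have h3mr : (w:ℝ) ≤ 3 * (m:ℝ) := by exact_mod_cast h3m
          set a : ℝ := (m:ℝ) - 1 with ha
          set b : ℝ := (w:ℝ) - 3 with hb
          have ha1 : (1:ℝ) ≤ a := by simp [ha]; linarith
          have hb1 : (1:ℝ) ≤ b := by simp [hb]; linarith
          have hba : b ≤ 3 * a := by simp [ha, hb]; linarith
          have hcube : b ^ 3 ≤ (3 * a) ^ 3 := pow_le_pow_left₀ (by linarith) hba 3
          rw [div_le_div_iff₀ (by positivity) (by positivity)]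
          nlinarith [hcube, pow_pos (show (0:ℝ) < a by linarith) 3]
  · intro w hw
    have hcong : (∑' u : ℤ, if 1 ≤ u ∧ u ≠ 1 then ENNReal.ofReal (theta u (u + w) ^ 2) else 0)
        = ∑' u : ℤ, if (2:ℤ) ≤ u ∧ u ≠ 1 then ENNReal.ofReal (theta u (u + w) ^ 2) else 0 := by
      refine tsum_congr fun u => ?_
      refine if_congr ?_ rfl rfl
      constructor <;> (rintro ⟨h1, h2⟩; exact ⟨by omega, h2⟩)
    rw [hcong]
    have := tsum_bound 2 w le_rfl
    have hval : (16 : ℝ) / (3 * (((2:ℤ) : ℝ) - 1) ^ 3) = 16 / 3 := by norm_num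
    rwa [hval] at this
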